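/- Discrete version: let w₁,…,w_N ∈ [0,1] with Σᵢ wᵢ > 0, and for x ∈ [0,1]^N define SD(x) = 1 − 2Σᵢ xᵢwᵢ/(Σᵢ xᵢ + Σᵢ wᵢ). Let D* = max over binary vectors y ∈ {0,1}^N of 2Σᵢ yᵢwᵢ/(Σᵢ yᵢ + Σᵢ wᵢ). Then a vector x ∈ [0,1]^N minimizes SD over [0,1]^N if and only if for every index i: xᵢ = 0 whenever wᵢ < D*/2 and xᵢ = 1 whenever wᵢ > D*/2; moreover min SD = 1 − D*. -/
import Mathlib


open Filter

noncomputable section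

/-- Discrete soft-Dice loss `SD(x) = 1 - 2⟨x,w⟩/(‖x‖₁ + ‖w‖₁)`. -/
def SDd {N : ℕ} (w x : Fin N → ℝ) : ℝ :=
  1 - 2 * (∑ i, x i * w i) / ((∑ i, x i) + (∑ i, w i))

/-- Discrete Dice score `D(y) = 2⟨y,w⟩/(‖y‖₁ + ‖w‖₁)`. -/
def Dd {N : ℕ} (w y : Fin N → ℝ) : ℝ :=
  2 * (∑ i, y i * w i) / ((∑ i, y i) + (∑ i, w i))

/-- The set of soft-Dice values over `[0,1]^N`. -/
def SDdvals {N : ℕ} (w : Fin N → ℝ) : Set ℝ :=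
  {v : ℝ | ∃ x : Fin N → ℝ, (∀ i, x i ∈ Set.Icc (0:ℝ) 1) ∧ v = SDd w x}

/-- The set of Dice values over `{0,1}^N`. -/
def Ddvals {N : ℕ} (w : Fin N → ℝ) : Set ℝ :=
  {v : ℝ | ∃ y : Fin N → ℝ, (∀ i, y i = 0 ∨ y i = 1) ∧ v = Dd w y}

theorem discrete_soft_dice_minimizer_characterization
    {N : ℕ} (hN : 1 ≤ N) (w : Fin N → ℝ)
    (hw : ∀ i, w i ∈ Set.Icc (0:ℝ) 1) (hpos : 0 < ∑ i, w i)
    (Dstar : ℝ) (hD : Dstar = sSup (Ddvals w)) :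
    (∀ x : Fin N → ℝ, (∀ i, x i ∈ Set.Icc (0:ℝ) 1) →
      (SDd w x = sInf (SDdvals w) ↔
        ∀ i, (w i < Dstar / 2 → x i = 0) ∧ (Dstar / 2 < w i → x i = 1))) ∧
    sInf (SDdvals w) = 1 - Dstar := by
  subst hD
  have hden : ∀ x : Fin N → ℝ, (∀ i, 0 ≤ x i) → 0 < (∑ i, x i) + ∑ i, w i := by
    intro x hx
    have : 0 ≤ ∑ i, x i := Finset.sum_nonneg fun i _ => hx i
    linarith
  have expand : ∀ (x : Fin N → ℝ) (c : ℝ),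
      ∑ i, x i * (2 * w i - c) = 2 * (∑ i, x i * w i) - c * (∑ i, x i) := by
    intro x c
    rw [Finset.mul_sum, Finset.mul_sum, ← Finset.sum_sub_distrib]
    exact Finset.sum_congr rfl fun i _ => by ring
  have hSD : ∀ x : Fin N → ℝ, SDd w x = 1 - Dd w x := fun x => rfl
  -- Ddvals is finite and nonempty
  have hfin : (Ddvals w).Finite := by
    have hsub : Ddvals w ⊆ (fun y : Fin N → ℝ => Dd w y) ''
        (Set.univ.pi fun _ => ({0, 1} : Set ℝ)) := by
      rintro v ⟨y, hy, rfl⟩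
      exact ⟨y, fun i _ => by rcases hy i with h | h <;> simp [h], rfl⟩
    exact ((Set.Finite.pi fun _ => (Set.finite_singleton (1:ℝ)).insert 0).image _).subset hsub
  have hne : (Ddvals w).Nonempty :=
    ⟨Dd w (fun _ => 0), fun _ => 0, fun _ => Or.inl rfl, rfl⟩
  obtain ⟨y₀, hy₀bin, ht0⟩ := hne.csSup_mem hfin
  set t := sSup (Ddvals w) with htdef
  have hub : ∀ y : Fin N → ℝ, (∀ i, y i = 0 ∨ y i = 1) → Dd w y ≤ t :=
    fun y hy => le_csSup hfin.bddAbove ⟨y, hy, rfl⟩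
  have hy₀nn : ∀ i, 0 ≤ y₀ i := fun i => by rcases hy₀bin i with h | h <;> simp [h]
  -- characterizations of Dd inequalities/equalities
  have dle : ∀ x : Fin N → ℝ, (∀ i, 0 ≤ x i) → ∀ c : ℝ,
      (Dd w x ≤ c ↔ ∑ i, x i * (2 * w i - c) ≤ c * ∑ i, w i) := by
    intro x hx c
    have hd := hden x hx
    unfold Dd
    rw [div_le_iff₀ hd, expand]
    constructor <;> intro h <;> nlinarith [h]
  have deq : ∀ x : Fin N → ℝ, (∀ i, 0 ≤ x i) → ∀ c : ℝ,
      (Dd w x = c ↔ ∑ i, x i * (2 * w i - c) = c * ∑ i, w i) := by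
    intro x hx c
    have hd := hden x hx
    unfold Dd
    rw [div_eq_iff (ne_of_gt hd), expand]
    constructor <;> intro h <;> nlinarith [h]
  -- the key identity: sum of positive parts equals t * ∑ w
  have hsum : ∑ i, max (2 * w i - t) 0 = t * ∑ i, w i := by
    set y₁ : Fin N → ℝ := fun i => if t < 2 * w i then 1 else 0 with hy₁
    have hy₁bin : ∀ i, y₁ i = 0 ∨ y₁ i = 1 := fun i => by
      by_cases h : t < 2 * w i <;> simp [hy₁, h]
    have hy₁nn : ∀ i, 0 ≤ y₁ i := fun i => by rcases hy₁bin i with h | h <;> simp [h]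
    have h₁ : ∀ i, y₁ i * (2 * w i - t) = max (2 * w i - t) 0 := by
      intro i
      by_cases h : t < 2 * w i
      · simp [hy₁, h, max_eq_left (by linarith : (0:ℝ) ≤ 2 * w i - t)]
      · push_neg at h
        simp [hy₁, not_lt.mpr h, max_eq_right (by linarith : 2 * w i - t ≤ 0)]
    have le1 : ∑ i, max (2 * w i - t) 0 ≤ t * ∑ i, w i := by
      have h2 := (dle y₁ hy₁nn t).mp (hub y₁ hy₁bin)
      calc ∑ i, max (2 * w i - t) 0 = ∑ i, y₁ i * (2 * w i - t) :=
            Finset.sum_congr rfl fun i _ => (h₁ i).symm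
        _ ≤ _ := h2
    have le2 : t * ∑ i, w i ≤ ∑ i, max (2 * w i - t) 0 := by
      have heq := (deq y₀ hy₀nn t).mp ht0.symm
      rw [← heq]
      apply Finset.sum_le_sum
      intro i _
      rcases hy₀bin i with h | h
      · simp [h]
      · rw [h, one_mul]
        exact le_max_left _ _
    linarith
  -- termwise bound for x in the box
  have termle : ∀ x : Fin N → ℝ, (∀ i, x i ∈ Set.Icc (0:ℝ) 1) →
      ∀ i, x i * (2 * w i - t) ≤ max (2 * w i - t) 0 := by
    intro x hx i
    rcases le_total (2 * w i - t) 0 with h | h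
    · calc x i * (2 * w i - t) ≤ 0 := mul_nonpos_of_nonneg_of_nonpos (hx i).1 h
        _ ≤ _ := le_max_right _ _
    · calc x i * (2 * w i - t) ≤ 1 * (2 * w i - t) :=
            mul_le_mul_of_nonneg_right (hx i).2 h
        _ = 2 * w i - t := one_mul _
        _ ≤ _ := le_max_left _ _
  have hbound : ∀ x : Fin N → ℝ, (∀ i, x i ∈ Set.Icc (0:ℝ) 1) → Dd w x ≤ t := by
    intro x hx
    refine (dle x (fun i => (hx i).1) t).mpr ?_
    rw [← hsum]
    exact Finset.sum_le_sum fun i _ => termle x hx i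
  -- the infimum
  have hlow : ∀ v ∈ SDdvals w, 1 - t ≤ v := by
    rintro v ⟨x, hx, rfl⟩
    rw [hSD]
    have := hbound x hx
    linarith
  have hy₀Icc : ∀ i, y₀ i ∈ Set.Icc (0:ℝ) 1 := fun i => by
    rcases hy₀bin i with h | h <;> simp [h]
  have hmem' : (1 - t) ∈ SDdvals w := ⟨y₀, hy₀Icc, by rw [hSD, ht0]⟩
  have hinf : sInf (SDdvals w) = 1 - t :=
    le_antisymm (csInf_le ⟨1 - t, hlow⟩ hmem') (le_csInf ⟨_, hmem'⟩ hlow)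
  refine ⟨?_, hinf⟩
  intro x hx
  have hxnn : ∀ i, 0 ≤ x i := fun i => (hx i).1
  have termchar : ∀ i, (x i * (2 * w i - t) = max (2 * w i - t) 0 ↔
      ((w i < t / 2 → x i = 0) ∧ (t / 2 < w i → x i = 1))) := by
    intro i
    rcases lt_trichotomy (w i) (t / 2) with h | h | h
    · have ha : 2 * w i - t < 0 := by linarith
      rw [max_eq_right ha.le]
      constructor
      · intro he
        refine ⟨fun _ => ?_, fun h2 => absurd h2 (by linarith)⟩
        rcases mul_eq_zero.mp he with h0 | h0
        · exact h0
        · exact absurd h0 (ne_of_lt ha)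
      · rintro ⟨h0, -⟩
        rw [h0 h, zero_mul]
    · have ha : 2 * w i - t = 0 := by linarith
      simp only [ha, mul_zero, max_self, true_iff, eq_self_iff_true]
      exact ⟨fun h1 => absurd h1 (by simp [h]), fun h1 => absurd h1 (by simp [h])⟩
    · have ha : 0 < 2 * w i - t := by linarith
      rw [max_eq_left ha.le]
      constructor
      · intro he
        refine ⟨fun h2 => absurd h2 (by linarith), fun _ => ?_⟩
        have h3 : x i * (2 * w i - t) = 1 * (2 * w i - t) := by rw [he, one_mul]
        exact mul_right_cancel₀ (ne_of_gt ha) h3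
      · rintro ⟨-, h1⟩
        rw [h1 h, one_mul]
  rw [hinf, hSD]
  constructor
  · intro h
    have hdd : Dd w x = t := by linarith
    have heq := (deq x hxnn t).mp hdd
    rw [← hsum] at heq
    intro i
    exact (termchar i).mp
      ((Finset.sum_eq_sum_iff_of_le fun j _ => termle x hx j).mp heq i (Finset.mem_univ i))
  · intro hcond
    have heq : ∑ i, x i * (2 * w i - t) = ∑ i, max (2 * w i - t) 0 :=
      Finset.sum_congr rfl fun i _ => (termchar i).mpr (hcond i)
    have hdd : Dd w x = t := (deq x hxnn t).mpr (by rw [heq, hsum])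
    rw [hdd]
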